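/- Let r > 0, let κ : ℝ → ℝ satisfy the regularity condition, and let c ∈ ℝ. Then H(s,t) = c for all s, t ∈ ℝ if and only if κ is identically zero and c = 1/(2r). In particular, there is no regular Euclidean tubular surface of constant mean curvature c ≤ 0, and for c > 0 the only ones are the right cylinders of radius 1/(2c). -/

import Mathlib

theorem stmt_12 (r : ℝ) (hr : 0 < r) (κ : ℝ → ℝ)
    (hreg : ∀ s t : ℝ, 1 - r * κ s * Real.cos t ≠ 0) (c : ℝ) :
    (∀ s t : ℝ,
        (2 * r * κ s * Real.cos t - 1) / (2 * r * (r * κ s * Real.cos t - 1)) = c) ↔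
      ((∀ s, κ s = 0) ∧ c = 1 / (2 * r)) := by
  constructor
  · intro h
    have hk : ∀ s, κ s = 0 := by
      intro s
      have h0 := h s 0
      have hp := h s Real.pi
      have hr0 := hreg s 0
      have hrp := hreg s Real.pi
      simp [Real.cos_pi] at h0 hp hr0 hrp
      set x := r * κ s with hx
      have hd0 : 2 * r * (x - 1) ≠ 0 := by
        intro hh
        apply hr0
        have : x - 1 = 0 := by
          rcases mul_eq_zero.1 hh with h' | h'
          · linarith
          · exact h'
        linarith
      have hdp : 2 * r * (-x - 1) ≠ 0 := by
        intro hh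
        apply hrp
        have : -x - 1 = 0 := by
          rcases mul_eq_zero.1 hh with h' | h'
          · linarith
          · exact h'
        linarith
      have e0 : 2 * x - 1 = c * (2 * r * (x - 1)) := by
        rw [div_eq_iff hd0] at h0; rw [hx] at h0 ⊢; linear_combination h0
      have ep : -(2 * x) - 1 = c * (2 * r * (-x - 1)) := by
        rw [div_eq_iff hdp] at hp
        ring_nf at hp ⊢; linarith
      have hx0 : x = 0 := by nlinarith [hreg s 0, hreg s Real.pi]
      have : r * κ s = 0 := hx0
      rcases mul_eq_zero.1 this with h' | h'
      · exact absurd h' (ne_of_gt hr)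
      · exact h'
    refine ⟨hk, ?_⟩
    have := h 0 0
    simp [hk 0] at this
    rw [← this]; ring
  · rintro ⟨hk, hc⟩ s t
    simp [hk s, hc]
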